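/- Assume M is symmetric positive definite. Starting from u₀, let u_j = q(u_{j−1}) for j = 1, …, m, and let u_{m+1} be produced by a single NGMRES(m) step from u₀, …, u_m (the case m = k of one-step NGMRES). Then ‖r_{m+1}‖ ≤ χ(m+1) · ‖r₀‖. -/

import Mathlib

open Matrix Polynomial Set

noncomputable section

/-- Matrix–vector product, landing in Euclidean space. -/
def mulVecE {n : ℕ} (M : Matrix (Fin n) (Fin n) ℝ) (v : EuclideanSpace ℝ (Fin n)) :
    EuclideanSpace ℝ (Fin n) :=
  WithLp.toLp 2 (M.mulVec v)

/-- Residual `r(u) = A u - b`. -/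
def res {n : ℕ} (A : Matrix (Fin n) (Fin n) ℝ) (b u : EuclideanSpace ℝ (Fin n)) :
    EuclideanSpace ℝ (Fin n) :=
  mulVecE A u - b

/-- Richardson fixed-point map `q(u) = (I - A) u + b = M u + b` with `M = I - A`. -/
def fp {n : ℕ} (A : Matrix (Fin n) (Fin n) ℝ) (b u : EuclideanSpace ℝ (Fin n)) :
    EuclideanSpace ℝ (Fin n) :=
  mulVecE (1 - A) u + b

/-- The NGMRES(m) least-squares objective at step `k`:
`β ↦ ‖r(q(u_k)) + Σ_{i=0}^m β_i (r(q(u_k)) - r(u_{k-i}))‖`. -/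
def ngObj {n : ℕ} (A : Matrix (Fin n) (Fin n) ℝ) (b : EuclideanSpace ℝ (Fin n))
    (m : ℕ) (prev : ℕ → EuclideanSpace ℝ (Fin n)) (k : ℕ) (β : Fin (m+1) → ℝ) : ℝ :=
  ‖res A b (fp A b (prev k)) +
    ∑ i : Fin (m+1), β i • (res A b (fp A b (prev k)) - res A b (prev (k - (i : ℕ))))‖

/-- `next` is produced from `prev (k-m), …, prev k` by a single NGMRES(m) step:
`next = q(u_k) + Σ_{i=0}^m β_i (q(u_k) - u_{k-i})` where `β` minimizes the
least-squares objective `ngObj`. -/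
def NGMRESStep {n : ℕ} (A : Matrix (Fin n) (Fin n) ℝ) (b : EuclideanSpace ℝ (Fin n))
    (m : ℕ) (prev : ℕ → EuclideanSpace ℝ (Fin n)) (k : ℕ)
    (next : EuclideanSpace ℝ (Fin n)) : Prop :=
  ∃ β : Fin (m+1) → ℝ,
    (∀ γ : Fin (m+1) → ℝ, ngObj A b m prev k β ≤ ngObj A b m prev k γ) ∧
    next = fp A b (prev k) +
      ∑ i : Fin (m+1), β i • (fp A b (prev k) - prev (k - (i : ℕ)))

/-- The spectral (ℓ²-operator) norm of a matrix. -/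
def opNorm {n : ℕ} (M : Matrix (Fin n) (Fin n) ℝ) : ℝ :=
  ‖(Matrix.toEuclideanCLM (𝕜 := ℝ) M : EuclideanSpace ℝ (Fin n) →L[ℝ] EuclideanSpace ℝ (Fin n))‖

/-- The 2-norm condition number `κ₂(U) = ‖U‖ ‖U⁻¹‖`. -/
def condNum {n : ℕ} (U : Matrix (Fin n) (Fin n) ℝ) : ℝ :=
  opNorm U * opNorm U⁻¹

/-- `ε(a,b,s)`: minimum over real polynomials `p` of degree at most `s` with `p(1) = 1`
of `max_{t ∈ [1/b, 1/a]} |p(t)|`. -/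
def eps (a b : ℝ) (s : ℕ) : ℝ :=
  sInf {t : ℝ | ∃ p : Polynomial ℝ, p.natDegree ≤ s ∧ p.eval 1 = 1 ∧
    t = sSup ((fun x => |p.eval x|) '' Set.Icc (1/b) (1/a))}

/-- `χ(s)`: minimum over real polynomials `p` of degree at most `s` with `p(1) = 1`
of `max_{λ ∈ Σ(M)} |p(λ)|`, where `Σ(M)` is the set of eigenvalues of `M`. -/
def chiSp {n : ℕ} (M : Matrix (Fin n) (Fin n) ℝ) (s : ℕ) : ℝ :=
  sInf {t : ℝ | ∃ p : Polynomial ℝ, p.natDegree ≤ s ∧ p.eval 1 = 1 ∧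
    t = sSup ((fun x => |p.eval x|) '' spectrum ℝ M)}

/-- The Krylov subspace `K_k(A, r) = span{r, Ar, …, A^{k-1} r}`. -/
def Krylov {n : ℕ} (A : Matrix (Fin n) (Fin n) ℝ) (r : EuclideanSpace ℝ (Fin n)) (k : ℕ) :
    Submodule ℝ (EuclideanSpace ℝ (Fin n)) :=
  Submodule.span ℝ (Set.range fun i : Fin k => mulVecE (A ^ (i : ℕ)) r)

/-- The matrix `S_k = [u_{k-m+1}-u_{k-m}, …, u_k-u_{k-1}, q(u_k)-u_k] ∈ ℝ^{n×(m+1)}`. -/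
def Smat {n : ℕ} (A : Matrix (Fin n) (Fin n) ℝ) (b : EuclideanSpace ℝ (Fin n))
    (prev : ℕ → EuclideanSpace ℝ (Fin n)) (k m : ℕ) :
    Matrix (Fin n) (Fin (m+1)) ℝ :=
  Matrix.of fun r c =>
    if (c : ℕ) < m then prev (k - m + c + 1) r - prev (k - m + c) r
    else fp A b (prev k) r - prev k r

/-- `u` is the sequence of aNGMRES(m, p) iterates (with `m = ⊤` giving aNGMRES(∞, p)):
if `p ∤ k` then `u_k = q(u_{k-1})`, and if `p ∣ k` then `u_k` is produced by one
NGMRES(min(m, k-1)) step from `u_{k-1-m_k}, …, u_{k-1}`. -/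
def aNGMRES {n : ℕ} (A : Matrix (Fin n) (Fin n) ℝ) (b : EuclideanSpace ℝ (Fin n))
    (m : ℕ∞) (p : ℕ) (u : ℕ → EuclideanSpace ℝ (Fin n)) : Prop :=
  ∀ k, 1 ≤ k →
    (¬ p ∣ k → u k = fp A b (u (k-1))) ∧
    (p ∣ k → NGMRESStep A b (min m ((k : ℕ∞) - 1)).toNat u (k-1) (u k))


section Aux

variable {n : ℕ}

lemma mulVecE_add (A : Matrix (Fin n) (Fin n) ℝ) (v w : EuclideanSpace ℝ (Fin n)) :
    mulVecE A (v + w) = mulVecE A v + mulVecE A w := (Matrix.toEuclideanLin (𝕜 := ℝ) A).map_add v w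

lemma mulVecE_smul (A : Matrix (Fin n) (Fin n) ℝ) (c : ℝ) (v : EuclideanSpace ℝ (Fin n)) :
    mulVecE A (c • v) = c • mulVecE A v := (Matrix.toEuclideanLin (𝕜 := ℝ) A).map_smul c v

lemma mulVecE_sub (A : Matrix (Fin n) (Fin n) ℝ) (v w : EuclideanSpace ℝ (Fin n)) :
    mulVecE A (v - w) = mulVecE A v - mulVecE A w := (Matrix.toEuclideanLin (𝕜 := ℝ) A).map_sub v w

lemma mulVecE_zero (A : Matrix (Fin n) (Fin n) ℝ) :
    mulVecE A (0 : EuclideanSpace ℝ (Fin n)) = 0 := (Matrix.toEuclideanLin (𝕜 := ℝ) A).map_zero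

lemma mulVecE_sum {ι : Type*} (s : Finset ι) (A : Matrix (Fin n) (Fin n) ℝ)
    (f : ι → EuclideanSpace ℝ (Fin n)) :
    mulVecE A (∑ i ∈ s, f i) = ∑ i ∈ s, mulVecE A (f i) :=
  map_sum (Matrix.toEuclideanLin (𝕜 := ℝ) A) f s

lemma mulVecE_mulVecE (A B : Matrix (Fin n) (Fin n) ℝ) (v : EuclideanSpace ℝ (Fin n)) :
    mulVecE A (mulVecE B v) = mulVecE (A * B) v := congrArg (WithLp.toLp 2) ((Matrix.mulVec_mulVec v A B))

lemma one_mulVecE (v : EuclideanSpace ℝ (Fin n)) : mulVecE 1 v = v := congrArg (WithLp.toLp 2) (Matrix.one_mulVec v)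

lemma zero_mulVecE (v : EuclideanSpace ℝ (Fin n)) : mulVecE 0 v = 0 := congrArg (WithLp.toLp 2) (Matrix.zero_mulVec v)

lemma add_mulVecE (A B : Matrix (Fin n) (Fin n) ℝ) (v : EuclideanSpace ℝ (Fin n)) :
    mulVecE (A + B) v = mulVecE A v + mulVecE B v := congrArg (WithLp.toLp 2) (Matrix.add_mulVec A B v)

lemma sub_mulVecE (A B : Matrix (Fin n) (Fin n) ℝ) (v : EuclideanSpace ℝ (Fin n)) :
    mulVecE (A - B) v = mulVecE A v - mulVecE B v := congrArg (WithLp.toLp 2) (Matrix.sub_mulVec A B v)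

lemma smul_mulVecE (c : ℝ) (A : Matrix (Fin n) (Fin n) ℝ) (v : EuclideanSpace ℝ (Fin n)) :
    mulVecE (c • A) v = c • mulVecE A v := congrArg (WithLp.toLp 2) (Matrix.smul_mulVec c A v)

lemma matrix_sum_mulVecE {ι : Type*} (s : Finset ι) (N : ι → Matrix (Fin n) (Fin n) ℝ)
    (v : EuclideanSpace ℝ (Fin n)) :
    mulVecE (∑ j ∈ s, N j) v = ∑ j ∈ s, mulVecE (N j) v := by
  classical
  induction s using Finset.cons_induction with
  | empty => simp [zero_mulVecE]
  | cons a s h ih => rw [Finset.sum_cons, Finset.sum_cons, add_mulVecE, ih]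

lemma res_fp (A : Matrix (Fin n) (Fin n) ℝ) (b v : EuclideanSpace ℝ (Fin n)) :
    res A b (fp A b v) = mulVecE (1 - A) (res A b v) := by
  simp only [res, fp]
  rw [mulVecE_add, mulVecE_mulVecE, mulVecE_sub, mulVecE_mulVecE, sub_mulVecE, one_mulVecE,
    mul_one_sub, one_sub_mul, sub_mulVecE]
  abel

lemma mulVecE_eigen {M : Matrix (Fin n) (Fin n) ℝ} (hM : M.IsHermitian) (i : Fin n) :
    mulVecE M (hM.eigenvectorBasis i) = hM.eigenvalues i • hM.eigenvectorBasis i :=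
  congrArg (WithLp.toLp 2) (hM.mulVec_eigenvectorBasis i)

lemma mulVecE_pow_eigen {M : Matrix (Fin n) (Fin n) ℝ} (hM : M.IsHermitian) (k : ℕ) (i : Fin n) :
    mulVecE (M ^ k) (hM.eigenvectorBasis i) = (hM.eigenvalues i ^ k) • hM.eigenvectorBasis i := by
  induction k with
  | zero => simp [one_mulVecE]
  | succ k ih =>
      rw [pow_succ', ← mulVecE_mulVecE, ih, mulVecE_smul, mulVecE_eigen, smul_smul, ← pow_succ]

lemma mulVecE_aeval_eigen {M : Matrix (Fin n) (Fin n) ℝ} (hM : M.IsHermitian)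
    (p : Polynomial ℝ) (i : Fin n) :
    mulVecE (Polynomial.aeval M p) (hM.eigenvectorBasis i)
      = (p.eval (hM.eigenvalues i)) • hM.eigenvectorBasis i := by
  rw [Polynomial.aeval_eq_sum_range, matrix_sum_mulVecE]
  simp_rw [smul_mulVecE, mulVecE_pow_eigen, smul_smul]
  rw [Polynomial.eval_eq_sum_range, Finset.sum_smul]

lemma norm_aeval_mulVecE_le [Nonempty (Fin n)] {M : Matrix (Fin n) (Fin n) ℝ}
    (hM : M.IsHermitian) (p : Polynomial ℝ) (v : EuclideanSpace ℝ (Fin n)) :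
    ‖mulVecE (Polynomial.aeval M p) v‖
      ≤ sSup ((fun x => |p.eval x|) '' spectrum ℝ M) * ‖v‖ := by
  classical
  set C := sSup ((fun x => |p.eval x|) '' spectrum ℝ M) with hC
  have hbdd : BddAbove ((fun x => |p.eval x|) '' spectrum ℝ M) :=
    ((Matrix.finite_real_spectrum (A := M)).image _).bddAbove
  have hmem : ∀ i, |p.eval (hM.eigenvalues i)| ≤ C := fun i =>
    le_csSup hbdd ⟨_, hM.eigenvalues_mem_spectrum_real i, rfl⟩
  have hC0 : 0 ≤ C := le_trans (abs_nonneg _) (hmem (Classical.arbitrary _))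
  set b := hM.eigenvectorBasis with hb
  have hv := b.sum_repr v
  have hTv : mulVecE (Polynomial.aeval M p) v
      = ∑ i, (p.eval (hM.eigenvalues i) * b.repr v i) • b i := by
    conv_lhs => rw [← hv]
    rw [mulVecE_sum]
    refine Finset.sum_congr rfl fun i _ => ?_
    rw [mulVecE_smul, mulVecE_aeval_eigen, smul_smul, mul_comm]
  have hnorm1 : ‖mulVecE (Polynomial.aeval M p) v‖ ^ 2
      = ∑ i, (p.eval (hM.eigenvalues i) * b.repr v i) ^ 2 := by
    rw [hTv, ← real_inner_self_eq_norm_sq, b.orthonormal.inner_sum]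
    simp [sq]
  have hnorm2 : ‖v‖ ^ 2 = ∑ i, (b.repr v i) ^ 2 := by
    conv_lhs => rw [← hv]
    rw [← real_inner_self_eq_norm_sq, b.orthonormal.inner_sum]
    simp [sq]
  have hsq : ‖mulVecE (Polynomial.aeval M p) v‖ ^ 2 ≤ (C * ‖v‖) ^ 2 := by
    rw [hnorm1, mul_pow, hnorm2, Finset.mul_sum]
    refine Finset.sum_le_sum fun i _ => ?_
    have h1 : (p.eval (hM.eigenvalues i)) ^ 2 ≤ C ^ 2 := by
      rw [← sq_abs]
      exact pow_le_pow_left₀ (abs_nonneg _) (hmem i) 2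
    calc (p.eval (hM.eigenvalues i) * b.repr v i) ^ 2
        = (p.eval (hM.eigenvalues i)) ^ 2 * (b.repr v i) ^ 2 := by ring
      _ ≤ C ^ 2 * (b.repr v i) ^ 2 := mul_le_mul_of_nonneg_right h1 (sq_nonneg _)
  have h := Real.sqrt_le_sqrt hsq
  rwa [Real.sqrt_sq (norm_nonneg _), Real.sqrt_sq (by positivity)] at h

end Aux
/-- one-step NGMRES(m) with m = k in the SPD case,
`‖r_{m+1}‖ ≤ χ(m+1) · ‖r₀‖`. -/
theorem stmt_6 {n m : ℕ} (A : Matrix (Fin n) (Fin n) ℝ) (hA : IsUnit A)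
    (hPD : ((1 : Matrix (Fin n) (Fin n) ℝ) - A).PosDef)
    (b : EuclideanSpace ℝ (Fin n)) (u : ℕ → EuclideanSpace ℝ (Fin n))
    (hfp : ∀ j, 1 ≤ j → j ≤ m → u j = fp A b (u (j-1)))
    (next : EuclideanSpace ℝ (Fin n)) (hstep : NGMRESStep A b m u m next) :
    ‖res A b next‖ ≤ chiSp ((1 : Matrix (Fin n) (Fin n) ℝ) - A) (m+1) * ‖res A b (u 0)‖ := by
  classical
  obtain ⟨β, hβmin, hnext⟩ := hstep
  set M : Matrix (Fin n) (Fin n) ℝ := 1 - A with hMdef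
  have hM : M.IsHermitian := hPD.1
  set r0 : EuclideanSpace ℝ (Fin n) := res A b (u 0) with hr0def
  have hres : ∀ j, j ≤ m → res A b (u j) = mulVecE (M ^ j) r0 := by
    intro j
    induction j with
    | zero => intro _; rw [pow_zero, one_mulVecE]
    | succ j ih =>
        intro hj
        have h1 : u (j+1) = fp A b (u j) := by
          have h2 := hfp (j+1) (by omega) hj
          simpa using h2
        rw [h1, res_fp, ih (by omega), mulVecE_mulVecE, ← pow_succ']
  have hR : res A b (fp A b (u m)) = mulVecE (M ^ (m+1)) r0 := by
    rw [res_fp, hres m le_rfl, mulVecE_mulVecE, ← pow_succ']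
  have hSi : ∀ i : Fin (m+1), res A b (u (m - (i:ℕ))) = mulVecE (M ^ (m - (i:ℕ))) r0 :=
    fun i => hres _ (Nat.sub_le _ _)
  have hkey : res A b next
      = res A b (fp A b (u m)) + ∑ i : Fin (m+1),
          β i • (res A b (fp A b (u m)) - res A b (u (m - (i:ℕ)))) := by
    rw [hnext]
    simp only [res]
    rw [mulVecE_add, mulVecE_sum]
    have e : ∀ i : Fin (m+1), mulVecE A (β i • (fp A b (u m) - u (m - (i:ℕ))))
        = β i • ((mulVecE A (fp A b (u m)) - b) - (mulVecE A (u (m - (i:ℕ))) - b)) := by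
      intro i
      rw [mulVecE_smul, mulVecE_sub]
      congr 1
      abel
    rw [Finset.sum_congr rfl (fun i _ => e i)]
    abel
  have hnorm : ‖res A b next‖ = ngObj A b m u m β := by
    unfold ngObj
    rw [hkey]
  have hcand : ∀ p : Polynomial ℝ, p.natDegree ≤ m+1 → p.eval 1 = 1 →
      ∃ γ : Fin (m+1) → ℝ, ngObj A b m u m γ = ‖mulVecE (Polynomial.aeval M p) r0‖ := by
    intro p hdeg h1
    refine ⟨fun i => -(p.coeff (m - (i:ℕ))), ?_⟩
    unfold ngObj
    congr 1
    have hdeg' : p.natDegree < m + 2 := by omega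
    have hsum1 : ∑ j ∈ Finset.range (m+2), p.coeff j = 1 := by
      have h := Polynomial.eval_eq_sum_range' hdeg' (1:ℝ)
      simp only [one_pow, mul_one] at h
      rw [← h, h1]
    rw [hR]
    simp only [hSi]
    rw [Polynomial.aeval_eq_sum_range' hdeg', matrix_sum_mulVecE]
    simp_rw [smul_mulVecE]
    rw [Finset.sum_range_succ]
    simp only [smul_sub, neg_smul, sub_neg_eq_add]
    have e2 : ∑ i : Fin (m+1),
          (-(p.coeff (m - (i:ℕ)) • mulVecE (M ^ (m+1)) r0)
            + p.coeff (m - (i:ℕ)) • mulVecE (M ^ (m - (i:ℕ))) r0)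
        = (∑ j ∈ Finset.range (m+1), p.coeff j • mulVecE (M ^ j) r0)
          - (∑ j ∈ Finset.range (m+1), p.coeff j) • mulVecE (M ^ (m+1)) r0 := by
      rw [Finset.sum_add_distrib, Finset.sum_neg_distrib, neg_add_eq_sub]
      congr 1
      · rw [Fin.sum_univ_eq_sum_range (fun j => p.coeff (m - j) • mulVecE (M ^ (m - j)) r0) (m+1)]
        exact Finset.sum_range_reflect (fun j => p.coeff j • mulVecE (M ^ j) r0) (m+1)
      · rw [← Finset.sum_smul]
        congr 1
        rw [Fin.sum_univ_eq_sum_range (fun j => p.coeff (m - j)) (m+1)]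
        exact Finset.sum_range_reflect (fun j => p.coeff j) (m+1)
    rw [e2]
    have hc : p.coeff (m+1) = 1 - ∑ j ∈ Finset.range (m+1), p.coeff j := by
      rw [Finset.sum_range_succ] at hsum1; linarith
    rw [hc, sub_smul, one_smul]
    abel
  by_cases hr : r0 = 0
  · rw [hr, norm_zero, mul_zero]
    obtain ⟨γ, hγ⟩ := hcand ((X : Polynomial ℝ) ^ (m+1)) (by simp) (by simp)
    have h3 : ‖res A b next‖ ≤ ‖mulVecE (Polynomial.aeval M ((X : Polynomial ℝ) ^ (m+1))) r0‖ := by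
      rw [← hγ, hnorm]; exact hβmin γ
    rw [hr, mulVecE_zero, norm_zero] at h3
    exact h3
  · have hne : Nonempty (Fin n) := by
      by_contra h
      exact hr (by ext i; exact absurd (Nonempty.intro i) h)
    have hrpos : 0 < ‖r0‖ := norm_pos_iff.mpr hr
    have hle : ∀ t ∈ {t : ℝ | ∃ p : Polynomial ℝ, p.natDegree ≤ m+1 ∧ p.eval 1 = 1 ∧
        t = sSup ((fun x => |p.eval x|) '' spectrum ℝ M)}, ‖res A b next‖ / ‖r0‖ ≤ t := by
      rintro t ⟨p, hdeg, h1, rfl⟩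
      rw [div_le_iff₀ hrpos]
      obtain ⟨γ, hγ⟩ := hcand p hdeg h1
      calc ‖res A b next‖ = ngObj A b m u m β := hnorm
        _ ≤ ngObj A b m u m γ := hβmin γ
        _ = ‖mulVecE (Polynomial.aeval M p) r0‖ := hγ
        _ ≤ sSup ((fun x => |p.eval x|) '' spectrum ℝ M) * ‖r0‖ :=
            norm_aeval_mulVecE_le hM p r0
    have hSne : Set.Nonempty {t : ℝ | ∃ p : Polynomial ℝ, p.natDegree ≤ m+1 ∧ p.eval 1 = 1 ∧
        t = sSup ((fun x => |p.eval x|) '' spectrum ℝ M)} :=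
      ⟨_, X ^ (m+1), by simp, by simp, rfl⟩
    have hfin : ‖res A b next‖ / ‖r0‖ ≤ sInf {t : ℝ | ∃ p : Polynomial ℝ,
        p.natDegree ≤ m+1 ∧ p.eval 1 = 1 ∧
        t = sSup ((fun x => |p.eval x|) '' spectrum ℝ M)} := le_csInf hSne hle
    have hmul := mul_le_mul_of_nonneg_right hfin (le_of_lt hrpos)
    rw [div_mul_cancel₀ _ (ne_of_gt hrpos)] at hmul
    unfold chiSp
    exact hmul


end
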